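/- For any sampling distribution R, the matrices I − M̂_R and M̂_R − (2M̂ − I) are positive semidefinite, where M̂ = Σ_r E_r ∘ E_r is the standard average mixing matrix. -/

import Mathlib

open Matrix MeasureTheory
open scoped Matrix

/-- The average mixing matrix under a sampling distribution `μ`, expressed via the
(real) spectral idempotents `E r` of the adjacency matrix with eigenvalues `θ r`:
`M̂_R = ∑ r, E r ∘ E r + 2 ∑_{s<r} E[cos ((θ r - θ s) R)] • (E r ∘ E s)`. -/
noncomputable def ammR {n d : ℕ} (θ : Fin d → ℝ)
    (E : Fin d → Matrix (Fin n) (Fin n) ℝ) (μ : Measure ℝ) : Matrix (Fin n) (Fin n) ℝ :=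
  (∑ r, E r ⊙ E r) +
    ∑ r, ∑ s ∈ Finset.univ.filter (· < r),
      (2 * ∫ t, Real.cos ((θ r - θ s) * t) ∂μ) • (E r ⊙ E s)

/-- Schur product theorem (real case): the Hadamard product of PSD matrices is PSD. -/
lemma posSemidef_hadamard {n : ℕ} {A B : Matrix (Fin n) (Fin n) ℝ}
    (hA : A.PosSemidef) (hB : B.PosSemidef) : (A ⊙ B).PosSemidef := by
  obtain ⟨C, rfl⟩ : ∃ C : Matrix (Fin n) (Fin n) ℝ, A = Cᴴ * C := by
    open scoped MatrixOrder in
    exact CStarAlgebra.nonneg_iff_eq_star_mul_self.mp hA.nonneg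
  have h1 := hA.1
  have h2 := hB.1
  refine Matrix.PosSemidef.of_dotProduct_mulVec_nonneg ?_ ?_
  · rw [Matrix.IsHermitian, conjTranspose_eq_transpose_of_trivial]
    ext i j
    simp only [Matrix.transpose_apply, Matrix.hadamard_apply]
    rw [show (Cᴴ * C) j i = (Cᴴ * C) i j from by
        rw [← star_trivial ((Cᴴ * C) j i), h1.apply],
      show B j i = B i j from by rw [← star_trivial (B j i), h2.apply]]
  · intro x
    have key : ∀ i j, (Cᴴ * C) i j = ∑ k, C k i * C k j := by
      intro i j
      simp [Matrix.mul_apply, conjTranspose_apply]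
    have expand : star x ⬝ᵥ ((Cᴴ * C) ⊙ B) *ᵥ x
        = ∑ i, ∑ j, ∑ k, (C k i * x i) * (B i j * (C k j * x j)) := by
      simp only [dotProduct, Matrix.mulVec, dotProduct, Matrix.hadamard_apply, key,
        star_trivial, Finset.sum_mul, Finset.mul_sum]
      exact Finset.sum_congr rfl fun i _ => Finset.sum_congr rfl fun j _ =>
        Finset.sum_congr rfl fun k _ => by ring
    have swap : ∑ i, ∑ j, ∑ k, (C k i * x i) * (B i j * (C k j * x j))
        = ∑ k, ∑ i, ∑ j, (C k i * x i) * (B i j * (C k j * x j)) := by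
      rw [show (∑ i, ∑ j, ∑ k, (C k i * x i) * (B i j * (C k j * x j)))
          = ∑ i, ∑ k, ∑ j, (C k i * x i) * (B i j * (C k j * x j)) from
        Finset.sum_congr rfl fun i _ => Finset.sum_comm]
      exact Finset.sum_comm
    rw [expand, swap]
    refine Finset.sum_nonneg fun k _ => ?_
    have := hB.dotProduct_mulVec_nonneg (fun i => C k i * x i)
    simpa [dotProduct, Matrix.mulVec, dotProduct, Finset.mul_sum, mul_assoc] using this

lemma posSemidef_smul' {n : ℕ} {A : Matrix (Fin n) (Fin n) ℝ} {c : ℝ}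
    (hA : A.PosSemidef) (hc : 0 ≤ c) : (c • A).PosSemidef := by
  refine Matrix.PosSemidef.of_dotProduct_mulVec_nonneg ?_ ?_
  · have hsym : Aᵀ = A := by
      rw [← conjTranspose_eq_transpose_of_trivial]; exact hA.1
    rw [Matrix.IsHermitian, conjTranspose_eq_transpose_of_trivial, Matrix.transpose_smul, hsym]
  · intro x
    rw [Matrix.smul_mulVec, dotProduct_smul, smul_eq_mul]
    exact mul_nonneg hc (hA.dotProduct_mulVec_nonneg x)

lemma posSemidef_sum' {n : ℕ} {ι : Type*} (s : Finset ι) (f : ι → Matrix (Fin n) (Fin n) ℝ)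
    (h : ∀ i ∈ s, (f i).PosSemidef) : (∑ i ∈ s, f i).PosSemidef := by
  classical
  induction s using Finset.induction with
  | empty => simpa using (Matrix.PosSemidef.zero (n := Fin n) (R := ℝ))
  | insert _ _ hi ih =>
    rw [Finset.sum_insert hi]
    exact (h _ (Finset.mem_insert_self _ _)).add
      (ih fun i hm => h i (Finset.mem_insert_of_mem hm))

/-- for any sampling distribution `R`, both `I - M̂_R` and
`M̂_R - (2 M̂ - I)` are positive semidefinite, where `M̂ = ∑ r, E r ⊙ E r` is the
standard average mixing matrix. -/
theorem averageMixingMatrix_posSemidef_bounds {n d : ℕ}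
    (θ : Fin d → ℝ) (E : Fin d → Matrix (Fin n) (Fin n) ℝ)
    (hθ : Function.Injective θ)
    (hEsym : ∀ r, (E r).IsSymm)
    (horth : ∀ r s, E r * E s = if r = s then E r else 0)
    (hsum : ∑ r, E r = 1)
    (μ : Measure ℝ) [IsProbabilityMeasure μ] :
    (1 - ammR θ E μ).PosSemidef ∧
      (ammR θ E μ - ((2 : ℝ) • (∑ r, E r ⊙ E r) - 1)).PosSemidef := by
  classical
  set c : Fin d → Fin d → ℝ := fun r s => ∫ t, Real.cos ((θ r - θ s) * t) ∂μ with hc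
  -- each E r is PSD
  have hEpsd : ∀ r, (E r).PosSemidef := by
    intro r
    have hrr : E r * E r = E r := by simpa using horth r r
    have hEE : E r = (E r)ᴴ * E r := by
      rw [conjTranspose_eq_transpose_of_trivial, (hEsym r).eq, hrr]
    rw [hEE]
    exact Matrix.posSemidef_conjTranspose_mul_self _
  have hXpsd : ∀ r s, (E r ⊙ E s).PosSemidef := fun r s =>
    posSemidef_hadamard (hEpsd r) (hEpsd s)
  -- bound on the integral
  have hcbd : ∀ r s, |c r s| ≤ 1 := by
    intro r s
    have h := norm_integral_le_of_norm_le_const (μ := μ)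
      (f := fun t => Real.cos ((θ r - θ s) * t)) (C := 1)
      (Filter.Eventually.of_forall fun t => by
        rw [Real.norm_eq_abs]; exact Real.abs_cos_le_one _)
    simpa [Real.norm_eq_abs, measure_univ] using h
  -- the key identity: 1 = ∑ E r ⊙ E r + ∑_{s<r} 2 (E r ⊙ E s)
  have hsq : (1 : Matrix (Fin n) (Fin n) ℝ) = ∑ r, ∑ s, E r ⊙ E s := by
    have : (∑ r, E r) ⊙ (∑ s, E s) = ∑ r, ∑ s, E r ⊙ E s := by
      ext i j
      simp [Matrix.hadamard_apply, Matrix.sum_apply, Finset.sum_mul_sum]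
    rw [← this, hsum]
    ext i j
    by_cases h : i = j <;> simp [Matrix.hadamard_apply, Matrix.one_apply, h]
  have hsplit : ∀ r : Fin d, (∑ s, E r ⊙ E s)
      = E r ⊙ E r + ((∑ s ∈ Finset.univ.filter (· < r), E r ⊙ E s)
        + ∑ s ∈ Finset.univ.filter (r < ·), E r ⊙ E s) := by
    intro r
    rw [← Finset.sum_filter_add_sum_filter_not Finset.univ (· < r) (fun s => E r ⊙ E s)]
    have : Finset.univ.filter (fun s => ¬ s < r) = insert r (Finset.univ.filter (r < ·)) := by
      ext s
      simp only [Finset.mem_filter, Finset.mem_univ, true_and, Finset.mem_insert, not_lt]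
      constructor
      · intro h; rcases eq_or_lt_of_le h with h | h
        · exact Or.inl h.symm
        · exact Or.inr h
      · rintro (rfl | h); · exact le_refl _
        · exact le_of_lt h
    rw [this, Finset.sum_insert (by simp)]
    abel
  have hswap : ∑ r, ∑ s ∈ Finset.univ.filter (r < ·), E r ⊙ E s
      = ∑ r, ∑ s ∈ Finset.univ.filter (· < r), E r ⊙ E s := by
    rw [Finset.sum_comm' (s' := fun y => Finset.univ.filter (· < y)) (t' := Finset.univ)
      (by intro x y; simp)]
    exact Finset.sum_congr rfl fun r _ => Finset.sum_congr rfl fun s _ =>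
      Matrix.hadamard_comm _ _
  have hone : (1 : Matrix (Fin n) (Fin n) ℝ)
      = (∑ r, E r ⊙ E r) + ∑ r, ∑ s ∈ Finset.univ.filter (· < r),
          (2 : ℝ) • (E r ⊙ E s) := by
    rw [hsq]
    rw [show (∑ r, ∑ s, E r ⊙ E s) = ∑ r, (E r ⊙ E r
        + ((∑ s ∈ Finset.univ.filter (· < r), E r ⊙ E s)
          + ∑ s ∈ Finset.univ.filter (r < ·), E r ⊙ E s)) from
      Finset.sum_congr rfl fun r _ => hsplit r]
    rw [Finset.sum_add_distrib, Finset.sum_add_distrib, hswap]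
    congr 1
    rw [← Finset.sum_add_distrib]
    refine Finset.sum_congr rfl fun r _ => ?_
    rw [← Finset.sum_add_distrib]
    refine Finset.sum_congr rfl fun s _ => ?_
    rw [two_smul]
  constructor
  · have hdiff : 1 - ammR θ E μ
        = ∑ r, ∑ s ∈ Finset.univ.filter (· < r),
            ((2 : ℝ) - 2 * c r s) • (E r ⊙ E s) := by
      rw [ammR, hone, add_sub_add_left_eq_sub, ← Finset.sum_sub_distrib]
      refine Finset.sum_congr rfl fun r _ => ?_
      rw [← Finset.sum_sub_distrib]
      exact Finset.sum_congr rfl fun s _ => (sub_smul _ _ _).symm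
    rw [hdiff]
    refine posSemidef_sum' _ _ fun r _ => posSemidef_sum' _ _ fun s _ =>
      posSemidef_smul' (hXpsd r s) ?_
    have := (abs_le.mp (hcbd r s)).2
    linarith
  · have hdiff : ammR θ E μ - ((2 : ℝ) • (∑ r, E r ⊙ E r) - 1)
        = ∑ r, ∑ s ∈ Finset.univ.filter (· < r),
            ((2 : ℝ) + 2 * c r s) • (E r ⊙ E s) := by
      have h2 : ((2 : ℝ) • (∑ r, E r ⊙ E r) : Matrix (Fin n) (Fin n) ℝ)
          = (∑ r, E r ⊙ E r) + (∑ r, E r ⊙ E r) := two_smul _ _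
      rw [ammR, h2]
      rw [show ((∑ r, E r ⊙ E r) + ∑ r, ∑ s ∈ Finset.univ.filter (· < r),
            (2 * c r s) • (E r ⊙ E s))
          - (((∑ r, E r ⊙ E r) + (∑ r, E r ⊙ E r)) - 1)
          = (1 - (∑ r, E r ⊙ E r)) + ∑ r, ∑ s ∈ Finset.univ.filter (· < r),
            (2 * c r s) • (E r ⊙ E s) from by abel]
      rw [hone, add_sub_cancel_left, ← Finset.sum_add_distrib]
      refine Finset.sum_congr rfl fun r _ => ?_
      rw [← Finset.sum_add_distrib]
      exact Finset.sum_congr rfl fun s _ => (add_smul _ _ _).symm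
    rw [hdiff]
    refine posSemidef_sum' _ _ fun r _ => posSemidef_sum' _ _ fun s _ =>
      posSemidef_smul' (hXpsd r s) ?_
    have := (abs_le.mp (hcbd r s)).1
    linarith
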